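/- arXiv:1707.02568 — 2 statements merged into one kernel-verified Lean document; each statement's English description precedes it below -/
import Mathlib

section
/- Let d be a positive natural number, T > 0, λ > 0, and let g : ℝ^d → ℝ be a bounded continuous function. Define u : (-∞, T) × ℝ^d → ℝ by u(t,x) = -(1/λ) log ( ∫_{ℝ^d} exp(-λ g(x + √(2(T-t)) · z)) dγ(z) ), where γ is the standard Gaussian measure on ℝ^d. Then for every x ∈ ℝ^d, u(t,x) converges to g(x) as t tends to T from the left; that is, u attains the terminal condition u(T,·) = g continuously. -/
open Real MeasureTheory ProbabilityTheory Filter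

/-- The standard Gaussian measure on `ℝ^d` (mean `0`, identity covariance). -/
noncomputable def stdGaussian (d : ℕ) : Measure (EuclideanSpace ℝ (Fin d)) :=
  (Measure.pi fun _ : Fin d => gaussianReal 0 1).map
    (MeasurableEquiv.toLp 2 (Fin d → ℝ))

instance (d : ℕ) : IsProbabilityMeasure (stdGaussian d) :=
  Measure.isProbabilityMeasure_map (MeasurableEquiv.measurable _).aemeasurable

/-- For bounded continuous `g`, the explicit HJB solution
`u(t,x) = -(1/λ) log ∫ exp(-λ g(x + √(2(T-t)) z)) dγ(z)` attains the terminal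
condition: for every `x`, `u(t,x) → g(x)` as `t → T⁻`. -/
theorem explicit_formula_attains_terminal_condition (d : ℕ) (hd : 0 < d)
    (T : ℝ) (hT : 0 < T) (lam : ℝ) (hlam : 0 < lam)
    (g : EuclideanSpace ℝ (Fin d) → ℝ) (hg : Continuous g)
    (C : ℝ) (hbd : ∀ x, |g x| ≤ C)
    (u : ℝ → EuclideanSpace ℝ (Fin d) → ℝ)
    (hu : ∀ t : ℝ, ∀ x : EuclideanSpace ℝ (Fin d),
      u t x = -(1 / lam) * Real.log
        (∫ z, Real.exp (-lam * g (x + Real.sqrt (2 * (T - t)) • z)) ∂(stdGaussian d))) :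
    ∀ x : EuclideanSpace ℝ (Fin d),
      Tendsto (fun t => u t x) (nhdsWithin T (Set.Iio T)) (nhds (g x)) := by
  intro x
  have hμ : (stdGaussian d) Set.univ = 1 := measure_univ
  -- integrals tend to exp (-lam * g x)
  have hI : Tendsto
      (fun t => ∫ z, Real.exp (-lam * g (x + Real.sqrt (2 * (T - t)) • z)) ∂(stdGaussian d))
      (nhdsWithin T (Set.Iio T)) (nhds (Real.exp (-lam * g x))) := by
    have key : Tendsto
        (fun t => ∫ z, Real.exp (-lam * g (x + Real.sqrt (2 * (T - t)) • z)) ∂(stdGaussian d))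
        (nhdsWithin T (Set.Iio T))
        (nhds (∫ _z : EuclideanSpace ℝ (Fin d), Real.exp (-lam * g x) ∂(stdGaussian d))) := by
      apply tendsto_integral_filter_of_dominated_convergence
        (bound := fun _ => Real.exp (lam * C))
      · filter_upwards with t
        exact (Real.continuous_exp.comp (((continuous_const.mul
          (hg.comp (continuous_const.add (continuous_id.const_smul (Real.sqrt (2 * (T - t))))))))
          )).aestronglyMeasurable
      · filter_upwards with t
        filter_upwards with z
        rw [Real.norm_eq_abs, Real.abs_exp, Real.exp_le_exp]
        have h1 := hbd (x + Real.sqrt (2 * (T - t)) • z)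
        nlinarith [abs_le.mp h1, hlam.le]
      · exact integrable_const (Real.exp (lam * C))
      · filter_upwards with z
        have hc : Continuous fun t : ℝ =>
            Real.exp (-lam * g (x + Real.sqrt (2 * (T - t)) • z)) :=
          Real.continuous_exp.comp (continuous_const.mul (hg.comp
            (continuous_const.add ((Real.continuous_sqrt.comp
              (continuous_const.mul (continuous_const.sub continuous_id))).smul
              continuous_const))))
        have := hc.tendsto T
        simp only [sub_self, mul_zero, Real.sqrt_zero, zero_smul, add_zero] at this
        exact this.mono_left nhdsWithin_le_nhds
    rwa [integral_const, measureReal_def, hμ, ENNReal.toReal_one, one_smul] at key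
  -- compose with log and scaling
  have hpos : (0:ℝ) < Real.exp (-lam * g x) := Real.exp_pos _
  have hlog : Tendsto
      (fun t => Real.log (∫ z, Real.exp (-lam * g (x + Real.sqrt (2 * (T - t)) • z))
        ∂(stdGaussian d))) (nhdsWithin T (Set.Iio T)) (nhds (-lam * g x)) := by
    have := (Real.continuousAt_log hpos.ne').tendsto.comp hI
    rwa [Real.log_exp] at this
  have := hlog.const_mul (-(1 / lam))
  have heq : -(1 / lam) * (-lam * g x) = g x := by field_simp
  rw [heq] at this
  refine this.congr fun t => ?_
  rw [hu t x]
end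

section
/- Let d be a positive natural number, λ > 0, T > 0, and let g : ℝ^d → ℝ be a bounded continuous function. For each t < T and x ∈ ℝ^d define v(t,x) = ∫_{ℝ^d} exp(-λ g(x + √(2(T-t)) · z)) dγ(z), where γ is the standard Gaussian measure on ℝ^d. Then for every fixed x ∈ ℝ^d, the map t ↦ v(t,x) is continuous on (-∞, T) and converges to exp(-λ g(x)) as t tends to T from the left. -/
open Real MeasureTheory ProbabilityTheory Filter

instance stdGaussian_isProbabilityMeasure (d : ℕ) :
    IsProbabilityMeasure (stdGaussian d) := by
  unfold _root_.stdGaussian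
  exact Measure.isProbabilityMeasure_map
    (MeasurableEquiv.toLp 2 (Fin d → ℝ)).measurable.aemeasurable

/-- For bounded continuous `g`, the Cole-Hopf transform
`v(t,x) = ∫ exp(-λ g(x + √(2(T-t)) z)) dγ(z)` is, for each fixed `x`, continuous in
`t` on `(-∞,T)` and converges to `exp(-λ g(x))` as `t → T⁻`. -/
theorem cole_hopf_transform_continuous_up_to_terminal_time
    (d : ℕ) (hd : 0 < d) (lam : ℝ) (hlam : 0 < lam) (T : ℝ) (hT : 0 < T)
    (g : EuclideanSpace ℝ (Fin d) → ℝ) (hg : Continuous g)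
    (C : ℝ) (hbd : ∀ x, |g x| ≤ C)
    (v : ℝ → EuclideanSpace ℝ (Fin d) → ℝ)
    (hv : ∀ t : ℝ, ∀ x : EuclideanSpace ℝ (Fin d),
      v t x = ∫ z, Real.exp (-lam * g (x + Real.sqrt (2 * (T - t)) • z)) ∂(stdGaussian d)) :
    ∀ x : EuclideanSpace ℝ (Fin d),
      ContinuousOn (fun t => v t x) (Set.Iio T) ∧
      Tendsto (fun t => v t x) (nhdsWithin T (Set.Iio T))
        (nhds (Real.exp (-lam * g x))) := by
  intro x
  set F : ℝ → ℝ := fun s => ∫ z, Real.exp (-lam * g (x + s • z)) ∂(stdGaussian d) with hF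
  have hFcont : Continuous F := by
    apply continuous_of_dominated (bound := fun _ => Real.exp (lam * C))
    · intro s
      exact Continuous.aestronglyMeasurable (by fun_prop)
    · intro s
      filter_upwards with z
      rw [Real.norm_eq_abs, abs_of_pos (Real.exp_pos _)]
      apply Real.exp_le_exp.2
      have h := (abs_le.1 (hbd (x + s • z))).1
      nlinarith
    · exact integrable_const _
    · filter_upwards with z
      fun_prop
  have hF0 : F 0 = Real.exp (-lam * g x) := by
    simp [hF]
  have hcomp : (fun t => v t x) = fun t => F (Real.sqrt (2 * (T - t))) := by
    funext t; rw [hv]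
  rw [hcomp]
  have hsq : Continuous fun t : ℝ => Real.sqrt (2 * (T - t)) := by fun_prop
  constructor
  · exact (hFcont.comp hsq).continuousOn
  · have h1 : Tendsto (fun t => Real.sqrt (2 * (T - t))) (nhdsWithin T (Set.Iio T))
        (nhds 0) := by
      have := (hsq.tendsto T).mono_left (nhdsWithin_le_nhds (s := Set.Iio T))
      simpa using this
    have := (hFcont.tendsto 0).comp h1
    rw [hF0] at this; exact this
end
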